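/- Polarization of functions is an L²-contraction of the symmetric decreasing structure in the following sense: if H is a closed half-space in ℝ^d with reflection σ_H and u, v : ℝ^d → ℝ are nonnegative and square integrable, then ‖P_H u − P_H v‖_{L²} ≤ ‖u − v‖_{L²}. -/

import Mathlib

open MeasureTheory

noncomputable section

variable {d : ℕ}

/-- The affine reflection `σ_H` across the boundary hyperplane of the closed
half-space `H = {x | ⟪x, a⟫ ≤ c}` (for `a ≠ 0`). -/
def reflH (a : EuclideanSpace ℝ (Fin d)) (c : ℝ) (x : EuclideanSpace ℝ (Fin d)) :
    EuclideanSpace ℝ (Fin d) :=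
  x - ((2 * ((inner ℝ x a : ℝ) - c)) / ‖a‖ ^ 2) • a

/-- The closed half-space `H = {x | ⟪x, a⟫ ≤ c}`. -/
def halfSpaceH (a : EuclideanSpace ℝ (Fin d)) (c : ℝ) : Set (EuclideanSpace ℝ (Fin d)) :=
  {x | (inner ℝ x a : ℝ) ≤ c}

/-- The polarization `P_H A = ((A ∪ A_H) ∩ H) ∪ (A ∩ A_H)` of a set `A`,
where `A_H = σ_H(A)`. -/
def polSet (a : EuclideanSpace ℝ (Fin d)) (c : ℝ) (A : Set (EuclideanSpace ℝ (Fin d))) :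
    Set (EuclideanSpace ℝ (Fin d)) :=
  ((A ∪ reflH a c '' A) ∩ halfSpaceH a c) ∪ (A ∩ reflH a c '' A)

open Classical in
/-- The polarization `P_H u` of a function: `max (u x) (u (σ_H x))` on `H`,
`min (u x) (u (σ_H x))` off `H`. -/
def polFun (a : EuclideanSpace ℝ (Fin d)) (c : ℝ) (u : EuclideanSpace ℝ (Fin d) → ℝ)
    (x : EuclideanSpace ℝ (Fin d)) : ℝ :=
  if x ∈ halfSpaceH a c then max (u x) (u (reflH a c x)) else min (u x) (u (reflH a c x))

private lemma key_ineq (s t p q : ℝ) :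
    (max s t - max p q) ^ 2 + (min s t - min p q) ^ 2 ≤ (s - p) ^ 2 + (t - q) ^ 2 := by
  rcases le_total s t with h1 | h1 <;> rcases le_total p q with h2 | h2 <;>
    simp only [max_eq_right, max_eq_left, min_eq_left, min_eq_right, h1, h2] <;> nlinarith

private lemma inner_reflH (a : EuclideanSpace ℝ (Fin d)) (ha : a ≠ 0) (c : ℝ)
    (x : EuclideanSpace ℝ (Fin d)) :
    (inner ℝ (reflH a c x) a : ℝ) = 2 * c - inner ℝ x a := by
  have hna : (‖a‖ : ℝ) ^ 2 ≠ 0 := pow_ne_zero _ (norm_ne_zero_iff.mpr ha)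
  simp only [reflH, inner_sub_left, real_inner_smul_left, real_inner_self_eq_norm_sq]
  field_simp
  ring

private lemma reflH_invol (a : EuclideanSpace ℝ (Fin d)) (ha : a ≠ 0) (c : ℝ)
    (x : EuclideanSpace ℝ (Fin d)) : reflH a c (reflH a c x) = x := by
  have h : (inner ℝ (x - (2 * ((inner ℝ x a : ℝ) - c) / ‖a‖ ^ 2) • a) a : ℝ)
      = 2 * c - inner ℝ x a := inner_reflH a ha c x
  simp only [reflH]
  rw [h, sub_sub, ← add_smul,
    show 2 * ((inner ℝ x a : ℝ) - c) / ‖a‖ ^ 2 +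
        2 * (2 * c - (inner ℝ x a : ℝ) - c) / ‖a‖ ^ 2 = 0 from by
      rw [← add_div, div_eq_zero_iff]; left; ring,
    zero_smul, sub_zero]

private lemma reflH_measurePreserving (a : EuclideanSpace ℝ (Fin d)) (ha : a ≠ 0) (c : ℝ) :
    MeasurePreserving (reflH a c) (volume : Measure (EuclideanSpace ℝ (Fin d))) volume := by
  have hna : (‖a‖ : ℝ) ^ 2 ≠ 0 := pow_ne_zero _ (norm_ne_zero_iff.mpr ha)
  have hrefl : reflH a c = (fun y => y + ((2 * c) / ‖a‖ ^ 2) • a) ∘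
      ⇑(Submodule.reflection ((ℝ ∙ a)ᗮ)) := by
    funext x
    simp only [Function.comp_apply, Submodule.reflection_apply, Submodule.starProjection_orthogonal_val,
      Submodule.starProjection_singleton, reflH]
    rw [real_inner_comm a x]
    norm_num [RCLike.ofReal_real_eq_id]
    match_scalars
    · norm_num
    · simp only [mul_one, mul_neg, ← mul_div_assoc, ← neg_div, ← add_div]
      congr 1
      ring
  rw [hrefl]
  exact (measurePreserving_add_right volume _).comp
    ((Submodule.reflection ((ℝ ∙ a)ᗮ)).measurePreserving)

private lemma enorm_sq_ofReal (r : ℝ) :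
    ‖r‖ₑ ^ (2 : ℝ) = ENNReal.ofReal (r ^ 2) := by
  rw [Real.enorm_eq_ofReal_abs, ENNReal.ofReal_rpow_of_nonneg (abs_nonneg r) (by norm_num : (0:ℝ) ≤ 2)]
  congr 1
  rw [show (2 : ℝ) = ((2 : ℕ) : ℝ) by norm_num, Real.rpow_natCast, sq_abs]

open Classical in
private lemma polFun_measurable (a : EuclideanSpace ℝ (Fin d)) (ha : a ≠ 0) (c : ℝ)
    {w : EuclideanSpace ℝ (Fin d) → ℝ} (hw : Measurable w) :
    Measurable (polFun a c w) := by
  have hTm : Measurable (reflH a c) := (reflH_measurePreserving a ha c).measurable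
  have hH : MeasurableSet (halfSpaceH a c) := by
    have hcont : Continuous fun x : EuclideanSpace ℝ (Fin d) => (inner ℝ x a : ℝ) :=
      continuous_id.inner continuous_const
    exact measurableSet_le hcont.measurable measurable_const
  exact Measurable.ite hH (hw.max (hw.comp hTm)) (hw.min (hw.comp hTm))

open Classical in
private lemma polFun_pointwise (a : EuclideanSpace ℝ (Fin d)) (ha : a ≠ 0) (c : ℝ)
    (u v : EuclideanSpace ℝ (Fin d) → ℝ) (x : EuclideanSpace ℝ (Fin d)) :
    (polFun a c u x - polFun a c v x) ^ 2
      + (polFun a c u (reflH a c x) - polFun a c v (reflH a c x)) ^ 2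
      ≤ (u x - v x) ^ 2 + (u (reflH a c x) - v (reflH a c x)) ^ 2 := by
  have hTT : reflH a c (reflH a c x) = x := reflH_invol a ha c x
  by_cases hx : x ∈ halfSpaceH a c <;> by_cases hx' : reflH a c x ∈ halfSpaceH a c
  · -- both in H : reflH a c x = x
    have hc : (inner ℝ x a : ℝ) = c := by
      have h1 : (inner ℝ x a : ℝ) ≤ c := hx
      have h2 : (inner ℝ (reflH a c x) a : ℝ) ≤ c := hx'
      rw [inner_reflH a ha c] at h2
      linarith
    have hxx : reflH a c x = x := by simp [reflH, hc]
    rw [hxx]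
    simp only [polFun, if_pos hx, hxx, max_self]
    exact le_rfl
  · simp only [polFun, if_pos hx, if_neg hx', hTT]
    rw [min_comm (u (reflH a c x)) (u x), min_comm (v (reflH a c x)) (v x)]
    exact key_ineq _ _ _ _
  · simp only [polFun, if_neg hx, if_pos hx', hTT]
    rw [max_comm (u (reflH a c x)) (u x), max_comm (v (reflH a c x)) (v x)]
    have := key_ineq (u x) (u (reflH a c x)) (v x) (v (reflH a c x))
    linarith
  · exfalso
    have h2 : ¬ (inner ℝ (reflH a c x) a : ℝ) ≤ c := hx'
    rw [inner_reflH a ha c] at h2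
    have h1 : ¬ (inner ℝ x a : ℝ) ≤ c := hx
    push_neg at h1 h2
    linarith

open Classical in
private lemma lintegral_pol_sq_le (a : EuclideanSpace ℝ (Fin d)) (ha : a ≠ 0) (c : ℝ)
    {u v : EuclideanSpace ℝ (Fin d) → ℝ} (hum : Measurable u) (hvm : Measurable v) :
    ∫⁻ x, ENNReal.ofReal ((polFun a c u x - polFun a c v x) ^ 2)
      ≤ ∫⁻ x, ENNReal.ofReal ((u x - v x) ^ 2) := by
  have hT := reflH_measurePreserving a ha c
  set G : EuclideanSpace ℝ (Fin d) → ENNReal :=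
    fun x => ENNReal.ofReal ((polFun a c u x - polFun a c v x) ^ 2) with hGdef
  set F : EuclideanSpace ℝ (Fin d) → ENNReal :=
    fun x => ENNReal.ofReal ((u x - v x) ^ 2) with hFdef
  have hGm : Measurable G :=
    (((polFun_measurable a ha c hum).sub (polFun_measurable a ha c hvm)).pow_const 2).ennreal_ofReal
  have hFm : Measurable F := ((hum.sub hvm).pow_const 2).ennreal_ofReal
  have key : ∀ x, G x + G (reflH a c x) ≤ F x + F (reflH a c x) := by
    intro x
    rw [hGdef, hFdef]
    rw [← ENNReal.ofReal_add (sq_nonneg _) (sq_nonneg _),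
      ← ENNReal.ofReal_add (sq_nonneg _) (sq_nonneg _)]
    exact ENNReal.ofReal_le_ofReal (polFun_pointwise a ha c u v x)
  have h2 : (2 : ENNReal) * ∫⁻ x, G x ≤ 2 * ∫⁻ x, F x := by
    have hGT : ∫⁻ x, G (reflH a c x) = ∫⁻ x, G x := hT.lintegral_comp hGm
    have hFT : ∫⁻ x, F (reflH a c x) = ∫⁻ x, F x := hT.lintegral_comp hFm
    calc (2 : ENNReal) * ∫⁻ x, G x = (∫⁻ x, G x) + ∫⁻ x, G (reflH a c x) := by
            rw [hGT, two_mul]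
      _ = ∫⁻ x, (G x + G (reflH a c x)) := (lintegral_add_left hGm _).symm
      _ ≤ ∫⁻ x, (F x + F (reflH a c x)) := lintegral_mono key
      _ = (∫⁻ x, F x) + ∫⁻ x, F (reflH a c x) := lintegral_add_left hFm _
      _ = 2 * ∫⁻ x, F x := by rw [hFT, two_mul]
  exact (ENNReal.mul_le_mul_iff_right (by norm_num) ENNReal.ofNat_ne_top).mp h2

/-- Polarization is an `L²`-contraction: for nonnegative square-integrable `u, v`,
`‖P_H u − P_H v‖_{L²} ≤ ‖u − v‖_{L²}`. -/
theorem polFun_L2_contraction (a : EuclideanSpace ℝ (Fin d)) (c : ℝ) (ha : a ≠ 0)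
    (u v : EuclideanSpace ℝ (Fin d) → ℝ) (hu0 : ∀ x, 0 ≤ u x) (hv0 : ∀ x, 0 ≤ v x)
    (hu : MemLp u 2 (volume : Measure (EuclideanSpace ℝ (Fin d))))
    (hv : MemLp v 2 (volume : Measure (EuclideanSpace ℝ (Fin d)))) :
    eLpNorm (fun x => polFun a c u x - polFun a c v x) 2
        (volume : Measure (EuclideanSpace ℝ (Fin d))) ≤
      eLpNorm (fun x => u x - v x) 2 (volume : Measure (EuclideanSpace ℝ (Fin d))) := by
  classical
  have hT := reflH_measurePreserving a ha c
  obtain ⟨u', hu'm, hue⟩ : ∃ u', Measurable u' ∧ u =ᵐ[volume] u' :=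
    ⟨hu.1.mk u, hu.1.stronglyMeasurable_mk.measurable, hu.1.ae_eq_mk⟩
  obtain ⟨v', hv'm, hve⟩ : ∃ v', Measurable v' ∧ v =ᵐ[volume] v' :=
    ⟨hv.1.mk v, hv.1.stronglyMeasurable_mk.measurable, hv.1.ae_eq_mk⟩
  have hcompu : u ∘ reflH a c =ᵐ[volume] u' ∘ reflH a c :=
    hT.quasiMeasurePreserving.ae_eq_comp hue
  have hcompv : v ∘ reflH a c =ᵐ[volume] v' ∘ reflH a c :=
    hT.quasiMeasurePreserving.ae_eq_comp hve
  have hpolu : polFun a c u =ᵐ[volume] polFun a c u' := by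
    filter_upwards [hue, hcompu] with x h1 h2
    simp only [polFun, h1]
    rw [show u (reflH a c x) = u' (reflH a c x) from h2]
  have hpolv : polFun a c v =ᵐ[volume] polFun a c v' := by
    filter_upwards [hve, hcompv] with x h1 h2
    simp only [polFun, h1]
    rw [show v (reflH a c x) = v' (reflH a c x) from h2]
  have e1 : (fun x => polFun a c u x - polFun a c v x)
      =ᵐ[volume] fun x => polFun a c u' x - polFun a c v' x := by
    filter_upwards [hpolu, hpolv] with x h1 h2
    rw [h1, h2]
  have e2 : (fun x => u x - v x) =ᵐ[volume] fun x => u' x - v' x := by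
    filter_upwards [hue, hve] with x h1 h2
    rw [h1, h2]
  rw [eLpNorm_congr_ae e1, eLpNorm_congr_ae e2,
    eLpNorm_eq_lintegral_rpow_enorm_toReal (by norm_num) (by norm_num),
    eLpNorm_eq_lintegral_rpow_enorm_toReal (by norm_num) (by norm_num)]
  have htr : (2 : ENNReal).toReal = 2 := by norm_num
  rw [htr]
  apply ENNReal.rpow_le_rpow _ (by norm_num)
  simp_rw [enorm_sq_ofReal]
  exact lintegral_pol_sq_le a ha c hu'm hv'm
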